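/- There is no tight rank-one IC-POVM on ℂ^{d^N} (N ≥ 2 parties, local dimension d ≥ 2) all of whose defining unit vectors are k-uniform states for some fixed k ≥ 1; i.e., if every |φ_j⟩ has every k-party reduced density matrix equal to (1/d^k)I, the reconstruction formula fails for some density matrix. -/

import Mathlib

open Matrix BigOperators Finset Kronecker
open scoped ComplexOrder

noncomputable section

/-- The rank-one projector `|v⟩⟨v|`. -/
def proj {n : Type*} [Fintype n] (v : n → ℂ) : Matrix n n ℂ :=
  Matrix.of fun a b => v a * star (v b)

/-- The inner product `⟨v|w⟩` on `n → ℂ`. -/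
def inner' {n : Type*} [Fintype n] (v w : n → ℂ) : ℂ := ∑ i, star (v i) * w i

/-- A density matrix: positive semidefinite with unit trace. -/
def IsDensity {n : Type*} [Fintype n] [DecidableEq n] (ρ : Matrix n n ℂ) : Prop :=
  ρ.PosSemidef ∧ ρ.trace = 1


/-- Combine an assignment on a subset `S` of parties with one on its complement. -/
def combine {N d : ℕ} (S : Finset (Fin N)) (x : {i // i ∈ S} → Fin d)
    (z : {i // i ∉ S} → Fin d) : Fin N → Fin d :=
  fun i => if h : i ∈ S then x ⟨i, h⟩ else z ⟨i, h⟩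

/-- Partial trace of a multipartite matrix onto the subset `S` of parties. -/
def reduce {N d : ℕ} (S : Finset (Fin N)) (M : Matrix (Fin N → Fin d) (Fin N → Fin d) ℂ) :
    Matrix ({i // i ∈ S} → Fin d) ({i // i ∈ S} → Fin d) ℂ :=
  Matrix.of fun x y => ∑ z : {i // i ∉ S} → Fin d, M (combine S x z) (combine S y z)

/-- A `k`-uniform pure state: every reduction to `k` parties is maximally mixed. -/
def kUniform {N d : ℕ} (k : ℕ) (v : (Fin N → Fin d) → ℂ) : Prop :=
  ∀ S : Finset (Fin N), S.card = k → reduce S (proj v) = ((1:ℂ)/(d^k : ℂ)) • 1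

/-- A fully separable (product) multipartite pure state. -/
def FullySep {N d : ℕ} (v : (Fin N → Fin d) → ℂ) : Prop :=
  ∃ w : Fin N → Fin d → ℂ, ∀ x, v x = ∏ i, w i (x i)


lemma sum_restrict {N d : ℕ} (S : Finset (Fin N)) (z0 : Fin d) (g : (Fin N → Fin d) → ℂ)
    [DecidablePred fun a : Fin N → Fin d => ∀ i ∈ S, a i = z0] :
    ∑ a : Fin N → Fin d, (if ∀ i ∈ S, a i = z0 then g a else 0)
      = ∑ z : {i // i ∉ S} → Fin d, g (combine S (fun _ => z0) z) := by
  classical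
  set e := (Equiv.piEquivPiSubtypeProd (fun i => i ∈ S) fun _ : Fin N => Fin d)
  rw [← Equiv.sum_comp e.symm (fun a => if ∀ i ∈ S, a i = z0 then g a else 0)]
  rw [Fintype.sum_prod_type]
  have hcond : ∀ (x : {i // i ∈ S} → Fin d) (z : {i // i ∉ S} → Fin d),
      (∀ i ∈ S, e.symm (x, z) i = z0) ↔ x = fun _ => z0 := by
    intro x z
    constructor
    · intro h; funext i
      have := h i.1 i.2
      simpa [e, Equiv.piEquivPiSubtypeProd, combine, dif_pos i.2] using this
    · intro h i hi
      subst h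
      simp [e, Equiv.piEquivPiSubtypeProd, dif_pos hi]
  have key : ∀ x : {i // i ∈ S} → Fin d,
      (∑ z : {i // i ∉ S} → Fin d, if ∀ i ∈ S, e.symm (x, z) i = z0 then g (e.symm (x, z)) else 0)
      = if x = (fun _ => z0) then ∑ z : {i // i ∉ S} → Fin d, g (e.symm (x, z)) else 0 := by
    intro x
    by_cases hx : x = fun _ => z0
    · rw [if_pos hx]
      exact Finset.sum_congr rfl fun z _ => if_pos ((hcond x z).mpr hx)
    · rw [if_neg hx]
      exact Finset.sum_eq_zero fun z _ => if_neg (fun h => hx ((hcond x z).mp h))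
  rw [Finset.sum_congr rfl fun x _ => key x, Finset.sum_ite_eq' univ (fun _ => z0)]
  simp only [mem_univ, if_true]
  rfl


/-- Proposition 3: a tight rank-one IC-POVM on `N` qudits cannot be composed exclusively
of `k`-uniform states: the reconstruction formula must fail for some density matrix. -/
theorem stmt_4 (N d k m : ℕ) (hN : 2 ≤ N) (hd : 2 ≤ d) (hk : 1 ≤ k) (hkN : k ≤ N) (hm : 0 < m)
    (φ : Fin m → (Fin N → Fin d) → ℂ) (hunit : ∀ j, inner' (φ j) (φ j) = 1)
    (hkuni : ∀ j, kUniform k (φ j))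
    (P : Fin m → Matrix (Fin N → Fin d) (Fin N → Fin d) ℂ)
    (hP : ∀ j, P j = (((d : ℂ)^N)/(m : ℂ)) • proj (φ j))
    (hsum : ∑ j, P j = 1) :
    ¬ (∀ ρ : Matrix (Fin N → Fin d) (Fin N → Fin d) ℂ, IsDensity ρ →
      ρ = (((m : ℂ) * ((d : ℂ)^N + 1))/((d : ℂ)^N)) • ∑ j, (ρ * P j).trace • P j - 1) := by
  classical
  intro H
  obtain ⟨S, -, hS⟩ := Finset.exists_subset_card_eq (show k ≤ (univ : Finset (Fin N)).card by simpa using hkN)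
  have hd0 : 0 < d := by omega
  have hdC : (d:ℂ) ≠ 0 := Nat.cast_ne_zero.mpr (by omega)
  have hmC : (m:ℂ) ≠ 0 := Nat.cast_ne_zero.mpr (by omega)
  set z0 : Fin d := ⟨0, hd0⟩ with hz0
  set c : ℂ := ((d:ℂ)^(N-k))⁻¹ with hc
  set ρ : Matrix (Fin N → Fin d) (Fin N → Fin d) ℂ :=
    Matrix.of (fun a b => if a = b ∧ ∀ i ∈ S, a i = z0 then c else 0) with hρ
  have hcpos : (0:ℂ) ≤ c := by
    have h : c = ((((d:ℝ)^(N-k))⁻¹ : ℝ) : ℂ) := by rw [hc]; push_cast; ring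
    rw [h]; exact Complex.zero_le_real.mpr (by positivity)
  have hdiag : ∀ a : Fin N → Fin d, ρ a a = if ∀ i ∈ S, a i = z0 then c else 0 := by
    intro a
    by_cases h : ∀ i ∈ S, a i = z0 <;> simp [hρ, h]
  have hrow : ∀ (x : (Fin N → Fin d) → ℂ) (a : Fin N → Fin d),
      (∑ b, ρ a b * x b) = if ∀ i ∈ S, a i = z0 then c * x a else 0 := by
    intro x a
    rw [Finset.sum_eq_single a]
    · by_cases h : ∀ i ∈ S, a i = z0 <;> simp [hρ, h]
    · intro b _ hb
      rw [hρ]; simp only [Matrix.of_apply]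
      rw [if_neg (fun h => hb h.1.symm), zero_mul]
    · simp
  have hherm : ρ.IsHermitian := by
    ext a b
    simp only [conjTranspose_apply, hρ, Matrix.of_apply]
    by_cases hab : a = b
    · subst hab
      by_cases h : ∀ i ∈ S, a i = z0
      · rw [if_pos (show a = a ∧ ∀ i ∈ S, a i = z0 from ⟨rfl, h⟩), hc]
        simp [Complex.star_def, map_inv₀, map_pow]
      · rw [if_neg (show ¬(a = a ∧ ∀ i ∈ S, a i = z0) from fun hh => h hh.2), star_zero]
    · rw [if_neg (show ¬(a = b ∧ ∀ i ∈ S, a i = z0) from fun h => hab h.1),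
        if_neg (show ¬(b = a ∧ ∀ i ∈ S, b i = z0) from fun h => hab h.1.symm), star_zero]
  have hpsd : ρ.PosSemidef := by
    refine Matrix.PosSemidef.of_dotProduct_mulVec_nonneg hherm fun x => ?_
    have heq : star x ⬝ᵥ ρ.mulVec x
        = ∑ a, (if ∀ i ∈ S, a i = z0 then c * (star (x a) * x a) else 0) := by
      simp only [dotProduct, mulVec]
      refine Finset.sum_congr rfl fun a _ => ?_
      rw [hrow x a]
      by_cases h : ∀ i ∈ S, a i = z0 <;> simp [h] <;> ring
    rw [heq]
    refine Finset.sum_nonneg fun a _ => ?_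
    by_cases h : ∀ i ∈ S, a i = z0
    · rw [if_pos h]
      exact mul_nonneg hcpos (star_mul_self_nonneg _)
    · rw [if_neg h]
  have hcard : Fintype.card ({i // i ∉ S} → Fin d) = d ^ (N - k) := by
    rw [Fintype.card_fun, Fintype.card_fin]
    congr 1
    have h2 : Fintype.card {i // i ∉ S} = N - Fintype.card {i // i ∈ S} := by
      simpa using Fintype.card_subtype_compl (fun i : Fin N => i ∈ S)
    rw [h2, Fintype.card_coe, hS]
  have hdnk : ((d:ℂ))^(N-k) ≠ 0 := pow_ne_zero _ hdC
  have htr : ρ.trace = 1 := by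
    have h0 : ρ.trace = ∑ a, ρ a a := rfl
    have h1 : ρ.trace = ∑ a : Fin N → Fin d, (if ∀ i ∈ S, a i = z0 then c else 0) :=
      h0.trans (Finset.sum_congr rfl fun a _ => hdiag a)
    rw [h1, sum_restrict S z0 (fun _ => c), Finset.sum_const, Finset.card_univ, hcard, nsmul_eq_mul, hc]
    push_cast
    field_simp
  have hred : ∀ j, (ρ * proj (φ j)).trace = ((d:ℂ)^N)⁻¹ := by
    intro j
    have h0 : (ρ * proj (φ j)).trace = ∑ a, (ρ * proj (φ j)) a a := rfl
    have h1 : (ρ * proj (φ j)).trace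
        = ∑ a : Fin N → Fin d, (if ∀ i ∈ S, a i = z0 then c * proj (φ j) a a else 0) :=
      h0.trans (Finset.sum_congr rfl fun a _ => by
        rw [Matrix.mul_apply]; exact hrow (fun b => proj (φ j) b a) a)
    rw [h1, sum_restrict S z0 (fun a => c * proj (φ j) a a), ← Finset.mul_sum]
    have h2 : (∑ z : {i // i ∉ S} → Fin d,
        proj (φ j) (combine S (fun _ => z0) z) (combine S (fun _ => z0) z))
        = reduce S (proj (φ j)) (fun _ => z0) (fun _ => z0) := rfl
    rw [h2, hkuni j S hS]
    simp only [Matrix.smul_apply, Matrix.one_apply_eq, smul_eq_mul, mul_one, hc]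
    rw [one_div, ← mul_inv, ← pow_add, Nat.sub_add_cancel hkN]
  have htrP : ∀ j, (ρ * P j).trace = (m:ℂ)⁻¹ := by
    intro j
    rw [hP j, Matrix.mul_smul, Matrix.trace_smul, hred j, smul_eq_mul]
    field_simp
  have Hρ := H ρ (show Matrix.PosSemidef ρ ∧ ρ.trace = 1 from ⟨hpsd, htr⟩)
  have hsum2 : (∑ j, (ρ * P j).trace • P j) = (m:ℂ)⁻¹ • (1 : Matrix _ _ ℂ) := by
    rw [← hsum, Finset.smul_sum]
    exact Finset.sum_congr rfl fun j _ => by rw [htrP j]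
  rw [hsum2] at Hρ
  set a0 : Fin N → Fin d := fun _ => z0 with ha0
  have e : ρ a0 a0 = ((((m : ℂ) * ((d : ℂ)^N + 1))/((d : ℂ)^N)) •
      ((m:ℂ)⁻¹ • (1 : Matrix (Fin N → Fin d) (Fin N → Fin d) ℂ)) - 1) a0 a0 :=
    congrFun (congrFun Hρ a0) a0
  rw [hdiag a0, if_pos (show ∀ i ∈ S, a0 i = z0 from fun i _ => rfl), Matrix.sub_apply,
    Matrix.smul_apply, Matrix.smul_apply, Matrix.one_apply_eq, smul_eq_mul,
    smul_eq_mul] at e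
  have hDC : ((d:ℂ))^N ≠ 0 := pow_ne_zero _ hdC
  have e2 : ((d:ℂ))^(N-k) = (d:ℂ)^N := by
    have h3 : c = ((d:ℂ)^N)⁻¹ := by
      rw [e]; field_simp; ring
    rw [hc] at h3
    exact inv_injective h3
  have e3 : (d:ℕ)^(N-k) = d^N := by exact_mod_cast e2
  have hlt : d^(N-k) < d^N := Nat.pow_lt_pow_right (by omega) (by omega)
  omega
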